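/- Let I ⊆ ℝ be an open interval, a, c, f₂ : ℝ → ℝ with c(x) ≠ 0 on I, and let H be differentiable on I with H(x) ≠ 0 and H'(x) = a(x) + f₂(x)/(4c(x)) for all x ∈ I. Define b(x) = ( f₂(x) − 4c(x)²H(x)² ) / ( 4c(x)H(x) ). Let B be differentiable on I with B'(x) = b(x) + 2c(x)H(x) = ( f₂(x) + 4c(x)²H(x)² ) / ( 4c(x)H(x) ), and G differentiable on I with G'(x) = c(x)·exp(B(x)). Then for every constant C₄ ∈ ℝ, the function y(x) = H(x) + exp(B(x))/(C₄ − G(x)) satisfies y'(x) = a(x) + b(x)y(x) + c(x)y(x)² at every x ∈ I with C₄ − G(x) ≠ 0. -/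

import Mathlib

/-- Theorem 3 (Case 3): with `H ≠ 0`, `H' = a + f₂/(4c)`,
`b = (f₂ − 4c²H²)/(4cH)`, `B' = b + 2cH = (f₂ + 4c²H²)/(4cH)` and
`G' = c · exp B`, the function `y = H + exp B / (C₄ − G)` solves the Riccati
equation wherever `C₄ − G ≠ 0`. -/
theorem riccati_case3_general
    (p q : ℝ) (a b c f₂ H B G : ℝ → ℝ)
    (hc : ∀ x ∈ Set.Ioo p q, c x ≠ 0)
    (hHne : ∀ x ∈ Set.Ioo p q, H x ≠ 0)
    (hH : ∀ x ∈ Set.Ioo p q,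
      HasDerivAt H (a x + f₂ x / (4 * c x)) x)
    (hb : ∀ x ∈ Set.Ioo p q,
      b x = (f₂ x - 4 * c x ^ 2 * H x ^ 2) / (4 * c x * H x))
    (hB : ∀ x ∈ Set.Ioo p q, HasDerivAt B (b x + 2 * c x * H x) x)
    (hG : ∀ x ∈ Set.Ioo p q, HasDerivAt G (c x * Real.exp (B x)) x)
    (C₄ : ℝ) :
    ∀ x ∈ Set.Ioo p q, C₄ - G x ≠ 0 →
      HasDerivAt (fun t => H t + Real.exp (B t) / (C₄ - G t))
        (a x + b x * (H x + Real.exp (B x) / (C₄ - G x))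
          + c x * (H x + Real.exp (B x) / (C₄ - G x)) ^ 2) x := by
  intro x hx hD
  have hcx := hc x hx
  have hHx := hHne x hx
  have hEx : Real.exp (B x) ≠ 0 := Real.exp_ne_zero _
  have hnum : HasDerivAt (fun t => Real.exp (B t))
      (Real.exp (B x) * (b x + 2 * c x * H x)) x := (hB x hx).exp
  have hden : HasDerivAt (fun t => C₄ - G t) (-(c x * Real.exp (B x))) x :=
    by have h := (hasDerivAt_const x C₄).sub (hG x hx); rw [zero_sub] at h; exact h
  have hdiv := hnum.div hden hD
  have hsum := (hH x hx).add hdiv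
  refine hsum.congr_deriv ?_
  rw [hb x hx]
  field_simp
  ring
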